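/- arXiv:1609.01969 — 2 statements merged into one kernel-verified Lean document; each statement's English description precedes it below -/
import Mathlib

section
/- Let G be a finite group and let K be a subgroup of G. Then K is a sol-component of G if and only if K is subnormal in G, K is perfect, and the quotient K/Sol(K) is a simple group. -/
open Pointwise

/-- A subgroup `H` of `G` is *subnormal* if there is a finite chain
`H = c 0 ⊴ c 1 ⊴ ⋯ ⊴ c n = G` with each term normal in the next. -/
def IsSubnormal {G : Type*} [Group G] (H : Subgroup G) : Prop :=
  ∃ (n : ℕ) (c : ℕ → Subgroup G), c 0 = H ∧ c n = ⊤ ∧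
    ∀ i < n, c i ≤ c (i + 1) ∧ ((c i).subgroupOf (c (i + 1))).Normal

/-- A group is *quasisimple* if it is perfect and its quotient by its center is simple. -/
def IsQuasisimpleGroup (Q : Type*) [Group Q] : Prop :=
  commutator Q = ⊤ ∧ IsSimpleGroup (Q ⧸ Subgroup.center Q)

/-- A *component* of `G` is a quasisimple subnormal subgroup. -/
def IsComponent {G : Type*} [Group G] (K : Subgroup G) : Prop :=
  IsSubnormal K ∧ IsQuasisimpleGroup ↥K

/-- The *layer* `E(G)`: the subgroup generated by all components of `G`. -/
def layer (G : Type*) [Group G] : Subgroup G :=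
  sSup {K : Subgroup G | IsComponent K}

/-- `Sol(G)`: the join of all solvable normal subgroups of `G`. -/
def solRadical (G : Type*) [Group G] : Subgroup G :=
  sSup {N : Subgroup G | N.Normal ∧ IsSolvable ↥N}

instance solRadical_normal (G : Type*) [Group G] : (solRadical G).Normal := by
  constructor
  intro n hn g
  have h : solRadical G ≤ (solRadical G).comap (MulAut.conj g).toMonoidHom := by
    apply sSup_le
    intro N hN x hx
    have hmem : g * x * g⁻¹ ∈ N := hN.1.conj_mem x hx g
    exact Subgroup.mem_comap.mpr
      (le_sSup hN (by simpa [MulAut.conj_apply] using hmem))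
  simpa [MulAut.conj_apply] using h hn

/-- A *sol-component* of `G` is a perfect subnormal subgroup of `G` whose image in
`G/Sol(G)` is a component of `G/Sol(G)`. -/
def IsSolComponent {G : Type*} [Group G] (K : Subgroup G) : Prop :=
  IsSubnormal K ∧ commutator ↥K = ⊤ ∧
    IsComponent (K.map (QuotientGroup.mk' (solRadical G)))

/-- `E_sol(G)`: the subgroup generated by all sol-components of `G`. -/
def solLayer (G : Type*) [Group G] : Subgroup G :=
  sSup {K : Subgroup G | IsSolComponent K}


universe u v

section Aux
variable {G : Type u} [Group G]

lemma solRadical_map_le {A : Type u} {B : Type v} [Group A] [Group B] (e : A ≃* B) :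
    (solRadical A).map e.toMonoidHom ≤ solRadical B := by
  rw [Subgroup.map_le_iff_le_comap]
  refine sSup_le ?_
  rintro N ⟨hn, hs⟩
  rw [← Subgroup.map_le_iff_le_comap]
  haveI : Group.IsSolvable ↥N := hs
  exact le_sSup ⟨hn.map e.toMonoidHom e.surjective,
    solvable_of_surjective (f := (N.equivMapOfInjective e.toMonoidHom e.injective).toMonoidHom)
      (N.equivMapOfInjective e.toMonoidHom e.injective).surjective⟩

lemma isSolvable_map {A : Type u} {B : Type v} [Group A] [Group B] (f : A →* B)
    (S : Subgroup A) [Group.IsSolvable ↥S] : IsSolvable ↥(S.map f) :=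
  solvable_of_surjective (f.subgroupMap_surjective S)

lemma isSolvable_sup {N M : Subgroup G} (hN : N.Normal) (hM : M.Normal)
    (hsN : IsSolvable ↥N) (hsM : IsSolvable ↥M) : IsSolvable ↥(N ⊔ M) := by
  haveI : Group.IsSolvable ↥N := hsN; haveI : Group.IsSolvable ↥M := hsM
  have hMle : M ≤ N ⊔ M := le_sup_right
  set g0 : ↥(N ⊔ M) →* G ⧸ M := (QuotientGroup.mk' M).comp (N ⊔ M).subtype with hg0
  have hrange : g0.range = N.map (QuotientGroup.mk' M) := by
    rw [hg0, MonoidHom.range_comp, Subgroup.range_subtype, Subgroup.map_sup,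
      (Subgroup.map_eq_bot_iff M).mpr (le_of_eq (QuotientGroup.ker_mk' M).symm), sup_bot_eq]
  haveI : Group.IsSolvable ↥g0.range := by
    rw [hrange]; exact isSolvable_map _ N
  refine solvable_of_ker_le_range (Subgroup.inclusion hMle) g0.rangeRestrict ?_
  rw [MonoidHom.ker_rangeRestrict, Subgroup.inclusion_range, hg0, ← MonoidHom.comap_ker,
    QuotientGroup.ker_mk']
  exact le_rfl
lemma isSolvable_solRadical (G : Type u) [Group G] [Finite G] : IsSolvable ↥(solRadical G) := by
  classical
  set s : Set (Subgroup G) := {N : Subgroup G | N.Normal ∧ IsSolvable ↥N} with hs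
  obtain ⟨M, hM, hmax⟩ := Set.Finite.exists_maximalFor id s (Set.toFinite s)
    ⟨⊥, inferInstance, (inferInstance : Group.IsSolvable ↥(⊥ : Subgroup G))⟩
  have hle : ∀ N ∈ s, N ≤ M := by
    intro N hN
    haveI := hN.1; haveI := hM.1
    have hmem : N ⊔ M ∈ s := ⟨inferInstance, isSolvable_sup hN.1 hM.1 hN.2 hM.2⟩
    have := hmax (j := N ⊔ M) hmem le_sup_right
    simpa [id] using le_sup_left.trans this
  have heq : solRadical G = M := le_antisymm (sSup_le hle) (le_sSup hM)
  rw [heq]; exact hM.2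

lemma chain_mono {c : ℕ → Subgroup G} {n : ℕ} (hc : ∀ i < n, c i ≤ c (i + 1)) :
    ∀ i j, i ≤ j → j ≤ n → c i ≤ c j := by
  intro i j hij hjn
  induction j with
  | zero => obtain rfl := Nat.le_zero.mp hij; exact le_rfl
  | succ j ih =>
    rcases eq_or_lt_of_le hij with rfl | h
    · exact le_rfl
    · exact (ih (Nat.lt_succ_iff.mp h) (by omega)).trans (hc j (by omega))

lemma IsSubnormal.of_le_normal {S K : Subgroup G} (hK : IsSubnormal K) (hle : S ≤ K)
    (hnorm : (S.subgroupOf K).Normal) : IsSubnormal S := by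
  obtain ⟨n, c, h0, hn, hstep⟩ := hK
  refine ⟨n + 1, fun i => Nat.rec S (fun j _ => c j) i, rfl, hn, ?_⟩
  intro i hi
  cases i with
  | zero =>
    constructor
    · show S ≤ c 0; rw [h0]; exact hle
    · show ((S.subgroupOf (c 0))).Normal; rw [h0]; exact hnorm
  | succ j => exact hstep j (by omega)

lemma IsSubnormal.map {H : Type v} [Group H] {K : Subgroup G} (hK : IsSubnormal K)
    (f : G →* H) (hf : Function.Surjective f) : IsSubnormal (K.map f) := by
  obtain ⟨n, c, h0, hn, hstep⟩ := hK
  refine ⟨n, fun i => (c i).map f, by simp only []; rw [h0], ?_, ?_⟩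
  · show (c n).map f = ⊤; rw [hn, ← MonoidHom.range_eq_map, MonoidHom.range_eq_top]; exact hf
  intro i hi
  obtain ⟨hle, hnorm⟩ := hstep i hi
  refine ⟨Subgroup.map_mono hle, ?_⟩
  rw [Subgroup.normal_subgroupOf_iff (Subgroup.map_mono hle)]
  rintro _ _ ⟨a, ha, rfl⟩ ⟨b, hb, rfl⟩
  exact ⟨b * a * b⁻¹, (Subgroup.normal_subgroupOf_iff hle).mp hnorm a b ha hb,
    by simp [map_mul]⟩
lemma solvable_subnormal_le_solRadical : ∀ (n : ℕ) {G : Type u} [Group G] [Finite G]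
    (S : Subgroup G) (c : ℕ → Subgroup G), c 0 = S → c n = ⊤ →
    (∀ i < n, c i ≤ c (i + 1) ∧ ((c i).subgroupOf (c (i + 1))).Normal) →
    IsSolvable ↥S → S ≤ solRadical G := by
  intro n
  induction n with
  | zero =>
    intro G _ _ S c h0 hn _ hs
    have hS : S = ⊤ := by rw [← h0, hn]
    subst hS
    exact le_sSup ⟨inferInstance, hs⟩
  | succ n ih =>
    intro G _ _ S c h0 hn hstep hs
    have hmono := chain_mono (n := n + 1) (fun i hi => (hstep i hi).1)
    have hHnormal : (c n).Normal := by
      have h2 := (hstep n (Nat.lt_succ_self n)).2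
      rw [Subgroup.normal_subgroupOf_iff (hstep n (Nat.lt_succ_self n)).1] at h2
      exact ⟨fun a ha g => h2 a g ha (by rw [hn]; trivial)⟩
    have hSH : S ≤ c n := h0 ▸ hmono 0 n (Nat.zero_le n) (Nat.le_succ n)
    have h0' : (fun i => (c i).subgroupOf (c n)) 0 = S.subgroupOf (c n) := by
      simp only []; rw [h0]
    have hn' : (fun i => (c i).subgroupOf (c n)) n = ⊤ := by
      simp only []; exact Subgroup.subgroupOf_self (c n)
    have hstep' : ∀ i < n, (fun i => (c i).subgroupOf (c n)) i ≤
        (fun i => (c i).subgroupOf (c n)) (i + 1) ∧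
        (((fun i => (c i).subgroupOf (c n)) i).subgroupOf
          ((fun i => (c i).subgroupOf (c n)) (i + 1))).Normal := by
      intro i hi
      have h1 := (hstep i (hi.trans (Nat.lt_succ_self n))).1
      have h2 := (hstep i (hi.trans (Nat.lt_succ_self n))).2
      rw [Subgroup.normal_subgroupOf_iff h1] at h2
      have hmle : (c i).subgroupOf (c n) ≤ (c (i + 1)).subgroupOf (c n) := fun x hx =>
        Subgroup.mem_subgroupOf.mpr (h1 (Subgroup.mem_subgroupOf.mp hx))
      refine ⟨hmle, ?_⟩
      rw [Subgroup.normal_subgroupOf_iff hmle]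
      intro a b ha hb
      exact Subgroup.mem_subgroupOf.mpr (by
        push_cast
        exact h2 _ _ (Subgroup.mem_subgroupOf.mp ha) (Subgroup.mem_subgroupOf.mp hb))
    haveI : Group.IsSolvable ↥S := hs
    haveI : IsSolvable ↥(S.subgroupOf (c n)) :=
      solvable_of_solvable_injective (f := (Subgroup.subgroupOfEquivOfLe hSH).toMonoidHom)
        (Subgroup.subgroupOfEquivOfLe hSH).injective
    have hle := ih (S.subgroupOf (c n)) (fun i => (c i).subgroupOf (c n)) h0' hn' hstep' this
    have key : (solRadical ↥(c n)).map (c n).subtype ≤ solRadical G := by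
      refine le_sSup ⟨⟨?_⟩, ?_⟩
      · rintro x ⟨s, hsmem, rfl⟩ g
        exact ⟨MulAut.conjNormal g s,
          solRadical_map_le (MulAut.conjNormal g : ↥(c n) ≃* ↥(c n))
            (Subgroup.mem_map_of_mem _ hsmem),
          MulAut.conjNormal_apply g s⟩
      · haveI : Group.IsSolvable ↥(solRadical ↥(c n)) := isSolvable_solRadical ↥(c n)
        exact isSolvable_map _ _
    calc S = (S.subgroupOf (c n)).map (c n).subtype := by
          rw [Subgroup.subgroupOf_map_subtype, inf_eq_left.mpr hSH]
      _ ≤ (solRadical ↥(c n)).map (c n).subtype := Subgroup.map_mono hle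
      _ ≤ solRadical G := key
lemma solRadical_quotient_eq_bot (G : Type u) [Group G] [Finite G] :
    solRadical (G ⧸ solRadical G) = ⊥ := by
  refine le_antisymm (sSup_le ?_) bot_le
  rintro N ⟨hn, hs⟩
  haveI : Group.IsSolvable ↥N := hs
  set π := QuotientGroup.mk' (solRadical G) with hπ
  set P := N.comap π with hP
  have hle : solRadical G ≤ P := fun x hx => by
    have : π x = 1 := (QuotientGroup.eq_one_iff x).mpr hx
    simp only [hP, Subgroup.mem_comap, this]; exact N.one_mem
  have hrange : ((π.comp P.subtype)).range = N := by
    rw [MonoidHom.range_comp, Subgroup.range_subtype, hP,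
      Subgroup.map_comap_eq_self_of_surjective (QuotientGroup.mk'_surjective _)]
  haveI : Group.IsSolvable ↥(π.comp P.subtype).range :=
    solvable_of_solvable_injective (f := (MulEquiv.subgroupCongr hrange).toMonoidHom)
      (MulEquiv.subgroupCongr hrange).injective
  haveI : Group.IsSolvable ↥(solRadical G) := isSolvable_solRadical G
  have hPsol : IsSolvable ↥P := by
    refine solvable_of_ker_le_range (Subgroup.inclusion hle) (π.comp P.subtype).rangeRestrict ?_
    rw [MonoidHom.ker_rangeRestrict, Subgroup.inclusion_range, ← MonoidHom.comap_ker, hπ,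
      QuotientGroup.ker_mk']
    exact le_rfl
  have hPle : P ≤ solRadical G := le_sSup ⟨hn.comap π, hPsol⟩
  have : N ≤ (solRadical G).map π := by
    rw [← Subgroup.map_comap_eq_self_of_surjective (QuotientGroup.mk'_surjective _) N]
    exact Subgroup.map_mono hPle
  refine this.trans ?_
  rw [(Subgroup.map_eq_bot_iff _).mpr (le_of_eq (QuotientGroup.ker_mk' _).symm)]

lemma subgroupOf_solRadical {K : Subgroup G} [Finite G] (hK : IsSubnormal K) :
    (solRadical G).subgroupOf K = solRadical ↥K := by
  refine le_antisymm ?_ ?_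
  · refine le_sSup ⟨Subgroup.normal_subgroupOf, ?_⟩
    haveI : Group.IsSolvable ↥(solRadical G) := isSolvable_solRadical G
    exact solvable_of_solvable_injective
      (f := ({ toFun := fun x => ⟨↑↑x, x.2⟩, map_one' := rfl, map_mul' := fun a b => rfl } :
        ↥((solRadical G).subgroupOf K) →* ↥(solRadical G)))
      (fun a b h => Subtype.ext (Subtype.ext (congrArg (Subtype.val : ↥(solRadical G) → G) h)))
  · show solRadical ↥K ≤ (solRadical G).comap K.subtype
    rw [← Subgroup.map_le_iff_le_comap]
    haveI : Group.IsSolvable ↥(solRadical ↥K) := isSolvable_solRadical ↥K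
    haveI : IsSolvable ↥((solRadical ↥K).map K.subtype) := isSolvable_map _ _
    obtain ⟨n, c, h0, hn, hstep⟩ := hK
    refine solvable_subnormal_le_solRadical (n + 1) _
      (fun i => Nat.rec ((solRadical ↥K).map K.subtype) (fun j _ => c j) i) rfl hn ?_ ‹_›
    intro i hi
    cases i with
    | zero =>
      constructor
      · show (solRadical ↥K).map K.subtype ≤ c 0
        rw [h0]; exact Subgroup.map_subtype_le _
      · show (((solRadical ↥K).map K.subtype).subgroupOf (c 0)).Normal
        rw [h0]
        have heq : ((solRadical ↥K).map K.subtype).subgroupOf K = solRadical ↥K :=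
          Subgroup.comap_map_eq_self_of_injective K.subtype_injective _
        rw [heq]; infer_instance
    | succ j => exact hstep j (by omega)
lemma MulEquiv.isSimpleGroup' {A : Type u} {B : Type v} [Group A] [Group B] (e : A ≃* B)
    (h : IsSimpleGroup A) : IsSimpleGroup B := by
  haveI := h
  haveI : Nontrivial B := e.symm.toEquiv.nontrivial
  exact IsSimpleGroup.isSimpleGroup_of_surjective e.toMonoidHom e.surjective

lemma commutator_subgroup_eq_top_iff {K : Subgroup G} : commutator ↥K = ⊤ ↔ ⁅K, K⁆ = K := by
  have hmap : ∀ L : Subgroup ↥K, L = ⊤ ↔ L.map K.subtype = K := by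
    intro L
    constructor
    · rintro rfl; rw [← MonoidHom.range_eq_map, Subgroup.range_subtype]
    · intro h
      apply Subgroup.map_injective K.subtype_injective
      rw [h, ← MonoidHom.range_eq_map, Subgroup.range_subtype]
  rw [commutator_def, hmap, Subgroup.map_commutator, ← MonoidHom.range_eq_map,
    Subgroup.range_subtype]

lemma center_map_le_solRadical {G : Type u} [Group G] [Finite G] {L : Subgroup G}
    (hL : IsSubnormal L) : (Subgroup.center ↥L).map L.subtype ≤ solRadical G := by
  have hnorm : (((Subgroup.center ↥L).map L.subtype).subgroupOf L).Normal := by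
    have heq : ((Subgroup.center ↥L).map L.subtype).subgroupOf L = Subgroup.center ↥L :=
      Subgroup.comap_map_eq_self_of_injective L.subtype_injective _
    rw [heq]; infer_instance
  have hsub : IsSubnormal ((Subgroup.center ↥L).map L.subtype) :=
    hL.of_le_normal (Subgroup.map_subtype_le _) hnorm
  haveI : Group.IsSolvable ↥(Subgroup.center ↥L) :=
    Group.isSolvable_of_comm (fun a b => Subtype.ext ((Subgroup.mem_center_iff.mp b.2) a))
  haveI : IsSolvable ↥((Subgroup.center ↥L).map L.subtype) := isSolvable_map _ _
  obtain ⟨n, c, h0, hn, hstep⟩ := hsub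
  exact solvable_subnormal_le_solRadical n _ c h0 hn hstep ‹_›

lemma center_eq_bot_of_subnormal {G : Type u} [Group G] [Finite G]
    {L : Subgroup (G ⧸ solRadical G)} (hL : IsSubnormal L) :
    Subgroup.center ↥L = ⊥ := by
  have h := center_map_le_solRadical hL
  rw [solRadical_quotient_eq_bot, le_bot_iff] at h
  exact (Subgroup.map_eq_bot_iff_of_injective _ L.subtype_injective).mp h
end Aux

/-- `K` is a sol-component of `G` iff `K` is subnormal in `G`,
perfect, and `K/Sol(K)` is simple. -/
theorem solComponent_iff_subnormal_perfect_quotient_simple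
    {G : Type*} [Group G] [Finite G] (K : Subgroup G) :
    IsSolComponent K ↔
      IsSubnormal K ∧ commutator ↥K = ⊤ ∧ IsSimpleGroup (↥K ⧸ solRadical ↥K) := by
  set π := QuotientGroup.mk' (solRadical G) with hπ
  have mkE : IsSubnormal K → ((↥K ⧸ solRadical ↥K) ≃* ↥(K.map π)) := by
    intro hsub
    have hker : (π.comp K.subtype).ker = solRadical ↥K := by
      rw [← MonoidHom.comap_ker, hπ, QuotientGroup.ker_mk']
      exact subgroupOf_solRadical hsub
    have hrange : (π.comp K.subtype).range = K.map π := by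
      rw [MonoidHom.range_comp, Subgroup.range_subtype]
    exact ((QuotientGroup.quotientMulEquivOfEq hker.symm).trans
      (QuotientGroup.quotientKerEquivRange _)).trans (MulEquiv.subgroupCongr hrange)
  constructor
  · rintro ⟨hsub, hperf, hcsub, hcperf, hcsimple⟩
    refine ⟨hsub, hperf, ?_⟩
    have hcenter : Subgroup.center ↥(K.map π) = ⊥ := center_eq_bot_of_subnormal hcsub
    have hsimpleK : IsSimpleGroup ↥(K.map π) :=
      ((QuotientGroup.quotientMulEquivOfEq hcenter).trans
        QuotientGroup.quotientBot).isSimpleGroup' hcsimple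
    exact (mkE hsub).symm.isSimpleGroup' hsimpleK
  · rintro ⟨hsub, hperf, hsimple⟩
    have hcsub : IsSubnormal (K.map π) := hsub.map π (QuotientGroup.mk'_surjective _)
    have hcenter : Subgroup.center ↥(K.map π) = ⊥ := center_eq_bot_of_subnormal hcsub
    have hsimpleK : IsSimpleGroup ↥(K.map π) := (mkE hsub).isSimpleGroup' hsimple
    refine ⟨hsub, hperf, hcsub, ?_, ?_⟩
    · rw [commutator_subgroup_eq_top_iff, ← Subgroup.map_commutator,
        commutator_subgroup_eq_top_iff.mp hperf]
    · exact ((QuotientGroup.quotientMulEquivOfEq hcenter).trans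
        QuotientGroup.quotientBot).symm.isSimpleGroup' hsimpleK
end

section
/- Let G be a finite group. Then Sol(G) normalizes every sol-component of G, i.e. for every sol-component K of G and every x ∈ Sol(G) one has xKx⁻¹ = K. -/
open Pointwise

section SolAux

variable {G : Type*} [Group G]

private lemma aux_relnormal {A B : Subgroup G} (hle : A ≤ B)
    (h : (A.subgroupOf B).Normal) :
    ∀ a ∈ A, ∀ b ∈ B, b * a * b⁻¹ ∈ A := by
  intro a ha b hb
  have := h.conj_mem ⟨a, hle ha⟩ (by simpa [Subgroup.mem_subgroupOf] using ha) ⟨b, hb⟩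
  simpa [Subgroup.mem_subgroupOf] using this

private lemma aux_commutator_self_le (H : Subgroup G) : ⁅H, H⁆ ≤ H :=
  Subgroup.commutator_le.mpr fun g₁ h₁ g₂ h₂ => by
    rw [commutatorElement_def]
    exact mul_mem (mul_mem (mul_mem h₁ h₂) (inv_mem h₁)) (inv_mem h₂)

private lemma aux_map_subtype_commutator (K : Subgroup G) :
    Subgroup.map K.subtype (commutator ↥K) = ⁅K, K⁆ := by
  rw [commutator_def, Subgroup.map_commutator, ← MonoidHom.range_eq_map,
    Subgroup.range_subtype]

private lemma aux_perfect_iff (K : Subgroup G) :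
    commutator ↥K = ⊤ ↔ ⁅K, K⁆ = K := by
  rw [← (Subgroup.map_injective K.subtype_injective).eq_iff, aux_map_subtype_commutator,
    ← MonoidHom.range_eq_map, Subgroup.range_subtype]

private lemma aux_mem_conj_smul {x g : G} {H : Subgroup G} :
    g ∈ MulAut.conj x • H ↔ x⁻¹ * g * x ∈ H := by
  rw [Subgroup.mem_pointwise_smul_iff_inv_smul_mem]
  simp [MulAut.smul_def, MulAut.conj_inv_apply, mul_assoc]

private lemma aux_mem_mul_of_mem_sup {A T : Subgroup G}
    (hnorm : ∀ a ∈ A, ∀ t ∈ T, t * a * t⁻¹ ∈ A)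
    {b : G} (hb : b ∈ A ⊔ T) : ∃ a ∈ A, ∃ t ∈ T, b = a * t := by
  let S₀ : Subgroup G :=
  { carrier := {g | ∃ a ∈ A, ∃ t ∈ T, g = a * t}
    one_mem' := ⟨1, one_mem A, 1, one_mem T, (one_mul 1).symm⟩
    mul_mem' := by
      rintro x y ⟨a₁, ha₁, t₁, ht₁, rfl⟩ ⟨a₂, ha₂, t₂, ht₂, rfl⟩
      exact ⟨a₁ * (t₁ * a₂ * t₁⁻¹), mul_mem ha₁ (hnorm _ ha₂ _ ht₁),
        t₁ * t₂, mul_mem ht₁ ht₂, by group⟩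
    inv_mem' := by
      rintro x ⟨a, ha, t, ht, rfl⟩
      exact ⟨t⁻¹ * a⁻¹ * t⁻¹⁻¹, hnorm _ (inv_mem ha) _ (inv_mem ht),
        t⁻¹, inv_mem ht, by group⟩ }
  have h1 : A ≤ S₀ := fun a ha => ⟨a, ha, 1, one_mem T, (mul_one a).symm⟩
  have h2 : T ≤ S₀ := fun t ht => ⟨1, one_mem A, t, ht, (one_mul t).symm⟩
  exact sup_le h1 h2 hb

private lemma aux_le_of_perfect {A B T : Subgroup G}
    (hAB : A ≤ B) (hTB : T ≤ B)
    (hAnorm : ∀ a ∈ A, ∀ b ∈ B, b * a * b⁻¹ ∈ A)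
    (hTsolv : IsSolvable ↥T)
    (hperf : commutator ↥B = ⊤)
    (hgen : B ≤ A ⊔ T) : B ≤ A := by
  haveI hA'norm : (A.subgroupOf B).Normal := by
    constructor
    rintro ⟨m, hm⟩ hmem ⟨g, hg⟩
    simpa [Subgroup.mem_subgroupOf] using
      hAnorm m (by simpa [Subgroup.mem_subgroupOf] using hmem) g hg
  have hsurj : Function.Surjective (QuotientGroup.mk' (A.subgroupOf B)) :=
    QuotientGroup.mk'_surjective _
  have hQperf : commutator (↥B ⧸ A.subgroupOf B) = ⊤ := by
    have hmap : Subgroup.map (QuotientGroup.mk' (A.subgroupOf B)) (commutator ↥B)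
        = commutator (↥B ⧸ A.subgroupOf B) := by
      rw [commutator_def, commutator_def, Subgroup.map_commutator,
        Subgroup.map_top_of_surjective _ hsurj]
    rw [← hmap, hperf, Subgroup.map_top_of_surjective _ hsurj]
  have hφ : Function.Surjective
      ((QuotientGroup.mk' (A.subgroupOf B)).comp (Subgroup.inclusion hTB)) := by
    intro q
    obtain ⟨p, rfl⟩ := hsurj q
    obtain ⟨a, ha, t, ht, hpt⟩ :=
      aux_mem_mul_of_mem_sup (fun a ha t ht => hAnorm a ha t (hTB ht)) (hgen p.2)
    refine ⟨⟨t, ht⟩, ?_⟩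
    simp only [MonoidHom.comp_apply, QuotientGroup.mk'_apply]
    refine QuotientGroup.eq.mpr ?_
    rw [Subgroup.mem_subgroupOf]
    show t⁻¹ * (p : G) ∈ A
    have heq : t⁻¹ * (a * t) = t⁻¹ * a * t⁻¹⁻¹ := by group
    rw [hpt, heq]
    exact hAnorm a ha t⁻¹ (inv_mem (hTB ht))
  haveI : Group.IsSolvable ↥T := hTsolv
  haveI hQs : IsSolvable (↥B ⧸ A.subgroupOf B) := solvable_of_surjective hφ
  have htriv : ∀ q : ↥B ⧸ A.subgroupOf B, q = 1 := by
    obtain ⟨⟨n, hn⟩⟩ := hQs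
    have hall : ∀ m, derivedSeries (↥B ⧸ A.subgroupOf B) m = ⊤ := by
      intro m
      induction m with
      | zero => exact derivedSeries_zero _
      | succ m ih => rw [derivedSeries_succ, ih, ← commutator_def]; exact hQperf
    intro q
    have : q ∈ (⊥ : Subgroup (↥B ⧸ A.subgroupOf B)) := by
      rw [← hn, hall n]; trivial
    simpa using this
  intro b hb
  have h2 : (⟨b, hb⟩ : ↥B) ∈ (QuotientGroup.mk' (A.subgroupOf B)).ker := by
    rw [MonoidHom.mem_ker]
    exact htriv _
  rw [QuotientGroup.ker_mk'] at h2
  exact Subgroup.mem_subgroupOf.mp h2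

private lemma aux_chain {T : Subgroup G} (hTsolv : IsSolvable ↥T) :
    ∀ (n : ℕ) (c : ℕ → Subgroup G),
      (∀ i < n, c i ≤ c (i + 1) ∧ ∀ a ∈ c i, ∀ b ∈ c (i + 1), b * a * b⁻¹ ∈ c i) →
      T ≤ c n → (∀ t ∈ T, ∀ d ∈ c n, d * t * d⁻¹ ∈ T) →
      commutator ↥(c n) = ⊤ → c n ≤ c 0 ⊔ T → c 0 = c n := by
  intro n
  induction n with
  | zero => intro c _ _ _ _ _; rfl
  | succ n ih =>
    intro c hchain hT hTnorm hperf hgen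
    have hmono : ∀ i ≤ n + 1, c 0 ≤ c i := by
      intro i hi
      induction i with
      | zero => exact le_rfl
      | succ i ihi =>
        exact (ihi (Nat.le_of_succ_le hi)).trans (hchain i (Nat.lt_of_succ_le hi)).1
    have hstep : c n = c (n + 1) := by
      have h1 := (hchain n (Nat.lt_succ_self n)).1
      have h2 := (hchain n (Nat.lt_succ_self n)).2
      refine le_antisymm h1 (aux_le_of_perfect h1 hT h2 hTsolv hperf ?_)
      exact hgen.trans (sup_le_sup_right (hmono n (Nat.le_succ n)) T)
    have hres := ih c (fun i hi => hchain i (hi.trans (Nat.lt_succ_self n)))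
      (by rw [hstep]; exact hT) (by rw [hstep]; exact hTnorm)
      (by rw [hstep]; exact hperf) (by rw [hstep]; exact hgen)
    exact hres.trans hstep

private lemma aux_eq_D [Finite G] {K D : Subgroup G}
    (hsolv : IsSolvable ↥(solRadical G))
    (n : ℕ) (c : ℕ → Subgroup G) (hc0 : c 0 = K) (hcn : c n = ⊤)
    (hchain : ∀ i < n, c i ≤ c (i + 1) ∧ ∀ a ∈ c i, ∀ b ∈ c (i + 1), b * a * b⁻¹ ∈ c i)
    (hKD : K ≤ D) (hDperf : commutator ↥D = ⊤)
    (hgen : D ≤ K ⊔ solRadical G) : K = D := by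
  haveI : Group.IsSolvable ↥(solRadical G) := hsolv
  haveI hTs : IsSolvable ↥(D ⊓ solRadical G) :=
    solvable_of_solvable_injective
      (Subgroup.inclusion_injective (inf_le_right : D ⊓ solRadical G ≤ solRadical G))
  have hch : ∀ i < n, c i ⊓ D ≤ c (i + 1) ⊓ D ∧
      ∀ a ∈ c i ⊓ D, ∀ b ∈ c (i + 1) ⊓ D, b * a * b⁻¹ ∈ c i ⊓ D := by
    intro i hi
    refine ⟨inf_le_inf_right D (hchain i hi).1, ?_⟩
    intro a ha b hb
    rw [Subgroup.mem_inf] at ha hb ⊢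
    exact ⟨(hchain i hi).2 a ha.1 b hb.1, mul_mem (mul_mem hb.2 ha.2) (inv_mem hb.2)⟩
  have hT : D ⊓ solRadical G ≤ c n ⊓ D := by
    rw [hcn]; exact le_inf le_top inf_le_left
  have hN : ∀ t ∈ D ⊓ solRadical G, ∀ d ∈ c n ⊓ D, d * t * d⁻¹ ∈ D ⊓ solRadical G := by
    intro t ht d hd
    rw [Subgroup.mem_inf] at ht hd ⊢
    exact ⟨mul_mem (mul_mem hd.2 ht.1) (inv_mem hd.2),
      (solRadical_normal G).conj_mem t ht.2 d⟩
  have hinf : c n ⊓ D = D := by rw [hcn]; exact top_inf_eq D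
  have hperf' : commutator ↥(c n ⊓ D) = ⊤ := by rw [hinf]; exact hDperf
  have hgen' : c n ⊓ D ≤ (c 0 ⊓ D) ⊔ (D ⊓ solRadical G) := by
    intro d hd
    rw [Subgroup.mem_inf] at hd
    have hd2 : d ∈ ((K : Set G) * (solRadical G : Set G)) := by
      rw [← Subgroup.mul_normal]
      exact hgen hd.2
    obtain ⟨k, hk, s, hs, rfl⟩ := hd2
    have hsD : s ∈ D := by
      have := mul_mem (inv_mem (hKD hk)) hd.2
      simpa [mul_assoc] using this
    refine mul_mem (Subgroup.mem_sup_left ?_) (Subgroup.mem_sup_right ?_)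
    · rw [Subgroup.mem_inf, hc0]; exact ⟨hk, hKD hk⟩
    · rw [Subgroup.mem_inf]; exact ⟨hsD, hs⟩
  have key : c 0 ⊓ D = c n ⊓ D :=
    aux_chain hTs n (fun i => c i ⊓ D) hch hT hN hperf' hgen'
  have e0 : c 0 ⊓ D = K := by rw [hc0]; exact inf_eq_left.mpr hKD
  rw [← e0, key, hinf]

private lemma aux_sup_solvable {N₁ N₂ : Subgroup G} (h₁ : N₁.Normal)
    (hs₁ : IsSolvable ↥N₁) (hs₂ : IsSolvable ↥N₂) : IsSolvable ↥(N₁ ⊔ N₂) := by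
  haveI := h₁
  haveI : Group.IsSolvable ↥N₁ := hs₁
  haveI : Group.IsSolvable ↥N₂ := hs₂
  haveI hA : Group.IsSolvable ↥(N₁.subgroupOf (N₁ ⊔ N₂)) :=
    solvable_of_solvable_injective
      (f := (Subgroup.subgroupOfEquivOfLe (le_sup_left : N₁ ≤ N₁ ⊔ N₂)).toMonoidHom)
      (Subgroup.subgroupOfEquivOfLe (le_sup_left : N₁ ≤ N₁ ⊔ N₂)).injective
  have hsurj : Function.Surjective
      ((QuotientGroup.mk' (N₁.subgroupOf (N₁ ⊔ N₂))).comp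
        (Subgroup.inclusion (le_sup_right : N₂ ≤ N₁ ⊔ N₂))) := by
    intro q
    obtain ⟨p, rfl⟩ := QuotientGroup.mk'_surjective _ q
    have hp : (p : G) ∈ ((N₁ : Set G) * (N₂ : Set G)) := by
      rw [← Subgroup.normal_mul]
      exact p.2
    obtain ⟨a, ha, b, hb, hab⟩ := hp
    refine ⟨⟨b, hb⟩, ?_⟩
    simp only [MonoidHom.comp_apply, QuotientGroup.mk'_apply]
    refine QuotientGroup.eq.mpr ?_
    rw [Subgroup.mem_subgroupOf]
    show b⁻¹ * (p : G) ∈ N₁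
    have heq : b⁻¹ * (a * b) = b⁻¹ * a * b⁻¹⁻¹ := by group
    rw [← hab, heq]
    exact h₁.conj_mem a ha b⁻¹
  haveI hQ : Group.IsSolvable (↥(N₁ ⊔ N₂) ⧸ N₁.subgroupOf (N₁ ⊔ N₂)) :=
    solvable_of_surjective hsurj
  exact solvable_of_ker_le_range (N₁.subgroupOf (N₁ ⊔ N₂)).subtype
    (QuotientGroup.mk' (N₁.subgroupOf (N₁ ⊔ N₂)))
    (by rw [QuotientGroup.ker_mk', Subgroup.range_subtype])

private lemma aux_solRadical_solvable (G : Type*) [Group G] [Finite G] :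
    IsSolvable ↥(solRadical G) := by
  haveI : Finite (Subgroup G) :=
    Finite.of_injective (fun H : Subgroup G => (H : Set G)) SetLike.coe_injective
  have hbot : (⊥ : Subgroup G) ∈ {N : Subgroup G | N.Normal ∧ IsSolvable ↥N} :=
    ⟨inferInstance, (inferInstance : Group.IsSolvable ↥(⊥ : Subgroup G))⟩
  obtain ⟨M, hM, hmax⟩ := Set.Finite.exists_maximalFor id
    {N : Subgroup G | N.Normal ∧ IsSolvable ↥N} (Set.toFinite _) ⟨⊥, hbot⟩
  have hle : solRadical G ≤ M := by
    refine sSup_le fun N hN => ?_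
    have hMN : M ⊔ N ∈ {N : Subgroup G | N.Normal ∧ IsSolvable ↥N} := by
      haveI := hM.1
      haveI := hN.1
      exact ⟨inferInstance, aux_sup_solvable hM.1 hM.2 hN.2⟩
    have hMeq : M = M ⊔ N := le_antisymm le_sup_left (hmax hMN le_sup_left)
    exact le_sup_right.trans hMeq.ge
  have heq : solRadical G = M := le_antisymm hle (le_sSup hM)
  rw [heq]; exact hM.2

private lemma aux_main {G : Type*} [Group G] [Finite G] {K K' : Subgroup G}
    (hperfK : commutator ↥K = ⊤) (hperfK' : commutator ↥K' = ⊤)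
    (n : ℕ) (c c' : ℕ → Subgroup G)
    (hc0 : c 0 = K) (hcn : c n = ⊤)
    (hchain : ∀ i < n, c i ≤ c (i + 1) ∧ ∀ a ∈ c i, ∀ b ∈ c (i + 1), b * a * b⁻¹ ∈ c i)
    (hc'0 : c' 0 = K') (hc'n : c' n = ⊤)
    (hchain' : ∀ i < n, c' i ≤ c' (i + 1) ∧ ∀ a ∈ c' i, ∀ b ∈ c' (i + 1), b * a * b⁻¹ ∈ c' i)
    (hK'le : K' ≤ K ⊔ solRadical G) (hKle : K ≤ K' ⊔ solRadical G) : K = K' := by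
  have hsolv : IsSolvable ↥(solRadical G) := aux_solRadical_solvable G
  set f : ℕ → Subgroup G := fun m => (fun H : Subgroup G => ⁅H, H⁆)^[m] (K ⊔ K') with hf
  have hf0 : f 0 = K ⊔ K' := rfl
  have hfsucc : ∀ m, f (m + 1) = ⁅f m, f m⁆ := fun m =>
    Function.iterate_succ_apply' _ _ _
  have hfanti : Antitone f :=
    antitone_nat_of_succ_le fun m => (hfsucc m) ▸ aux_commutator_self_le (f m)
  have hKcomm : ⁅K, K⁆ = K := (aux_perfect_iff K).mp hperfK
  have hK'comm : ⁅K', K'⁆ = K' := (aux_perfect_iff K').mp hperfK'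
  have hKf : ∀ m, K ≤ f m := by
    intro m
    induction m with
    | zero => exact le_sup_left
    | succ m ih =>
      calc K = ⁅K, K⁆ := hKcomm.symm
        _ ≤ ⁅f m, f m⁆ := Subgroup.commutator_mono ih ih
        _ = f (m + 1) := (hfsucc m).symm
  have hK'f : ∀ m, K' ≤ f m := by
    intro m
    induction m with
    | zero => exact le_sup_right
    | succ m ih =>
      calc K' = ⁅K', K'⁆ := hK'comm.symm
        _ ≤ ⁅f m, f m⁆ := Subgroup.commutator_mono ih ih
        _ = f (m + 1) := (hfsucc m).symm
  haveI : Finite (Subgroup G) :=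
    Finite.of_injective (fun H : Subgroup G => (H : Set G)) SetLike.coe_injective
  obtain ⟨i, j, hne, hij⟩ := Finite.exists_ne_map_eq_of_infinite f
  have hkey : ∃ p q, p < q ∧ f p = f q := by
    rcases hne.lt_or_gt with h | h
    · exact ⟨i, j, h, hij⟩
    · exact ⟨j, i, h, hij.symm⟩
  obtain ⟨p, q, hpq, hfpq⟩ := hkey
  have hDD : ⁅f p, f p⁆ = f p := by
    refine le_antisymm (aux_commutator_self_le _) ?_
    calc f p = f q := hfpq
      _ ≤ f (p + 1) := hfanti (Nat.succ_le_of_lt hpq)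
      _ = ⁅f p, f p⁆ := hfsucc p
  have hDperf : commutator ↥(f p) = ⊤ := (aux_perfect_iff (f p)).mpr hDD
  have hDN : f p ≤ K ⊔ K' := hf0 ▸ hfanti (Nat.zero_le p)
  have h1 : K = f p := aux_eq_D hsolv n c hc0 hcn hchain (hKf p) hDperf
    (hDN.trans (sup_le le_sup_left hK'le))
  have h2 : K' = f p := aux_eq_D hsolv n c' hc'0 hc'n hchain' (hK'f p) hDperf
    (hDN.trans (sup_le hKle le_sup_left))
  exact h1.trans h2.symm

end SolAux

/-- `Sol(G)` normalizes every sol-component of `G`: for every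
sol-component `K` of `G` and every `x ∈ Sol(G)` one has `xKx⁻¹ = K`. -/
theorem solRadical_normalizes_solComponent
    {G : Type*} [Group G] [Finite G] (K : Subgroup G) (hK : IsSolComponent K) :
    ∀ x ∈ solRadical G, MulAut.conj x • K = K := by
  intro x hx
  obtain ⟨⟨n, c, hc0, hcn, hchain⟩, hperfK, -⟩ := hK
  have hchainP : ∀ i < n, c i ≤ c (i + 1) ∧ ∀ a ∈ c i, ∀ b ∈ c (i + 1), b * a * b⁻¹ ∈ c i :=
    fun i hi => ⟨(hchain i hi).1, aux_relnormal (hchain i hi).1 (hchain i hi).2⟩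
  have hperfK' : commutator ↥(MulAut.conj x • K) = ⊤ := by
    have hmap : Subgroup.map (Subgroup.equivSMul (MulAut.conj x) K).toMonoidHom
        (commutator ↥K) = commutator ↥(MulAut.conj x • K) := by
      rw [commutator_def, commutator_def, Subgroup.map_commutator,
        Subgroup.map_top_of_surjective _ (Subgroup.equivSMul (MulAut.conj x) K).surjective]
    rw [← hmap, hperfK,
      Subgroup.map_top_of_surjective _ (Subgroup.equivSMul (MulAut.conj x) K).surjective]
  have hc'0 : (fun i => MulAut.conj x • c i) 0 = MulAut.conj x • K := by
    show MulAut.conj x • c 0 = MulAut.conj x • K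
    rw [hc0]
  have hc'n : (fun i => MulAut.conj x • c i) n = ⊤ := by
    show MulAut.conj x • c n = ⊤
    rw [hcn]
    refine eq_top_iff.mpr fun g _ => ?_
    exact aux_mem_conj_smul.mpr trivial
  have hchain' : ∀ i < n, (fun i => MulAut.conj x • c i) i ≤ (fun i => MulAut.conj x • c i) (i+1) ∧
      ∀ a ∈ MulAut.conj x • c i, ∀ b ∈ MulAut.conj x • c (i+1), b * a * b⁻¹ ∈ MulAut.conj x • c i := by
    intro i hi
    refine ⟨Subgroup.pointwise_smul_le_pointwise_smul_iff.mpr (hchainP i hi).1, ?_⟩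
    intro a ha b hb
    rw [aux_mem_conj_smul] at ha hb ⊢
    have heq : x⁻¹ * (b * a * b⁻¹) * x
        = (x⁻¹ * b * x) * (x⁻¹ * a * x) * (x⁻¹ * b * x)⁻¹ := by group
    rw [heq]
    exact (hchainP i hi).2 _ ha _ hb
  have hK'le : MulAut.conj x • K ≤ K ⊔ solRadical G := by
    intro g hg
    rw [aux_mem_conj_smul] at hg
    have hS : x * (x⁻¹ * g * x) * x⁻¹ * (x⁻¹ * g * x)⁻¹ ∈ solRadical G := by
      have h := mul_mem hx ((solRadical_normal G).conj_mem x⁻¹ (inv_mem hx) (x⁻¹ * g * x))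
      have heq : x * ((x⁻¹ * g * x) * x⁻¹ * (x⁻¹ * g * x)⁻¹)
          = x * (x⁻¹ * g * x) * x⁻¹ * (x⁻¹ * g * x)⁻¹ := by group
      rwa [heq] at h
    have hmem2 : (x * (x⁻¹ * g * x) * x⁻¹ * (x⁻¹ * g * x)⁻¹) * (x⁻¹ * g * x)
        ∈ K ⊔ solRadical G :=
      mul_mem (Subgroup.mem_sup_right hS) (Subgroup.mem_sup_left hg)
    have heq2 : (x * (x⁻¹ * g * x) * x⁻¹ * (x⁻¹ * g * x)⁻¹) * (x⁻¹ * g * x) = g := by group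
    rwa [heq2] at hmem2
  have hKle : K ≤ MulAut.conj x • K ⊔ solRadical G := by
    intro k hk
    have hk' : x * k * x⁻¹ ∈ MulAut.conj x • K := by
      rw [aux_mem_conj_smul]
      have heq : x⁻¹ * (x * k * x⁻¹) * x = k := by group
      rwa [heq]
    have hS : k * x * k⁻¹ * x⁻¹ ∈ solRadical G :=
      mul_mem ((solRadical_normal G).conj_mem x hx k) (inv_mem hx)
    have hmem2 : (k * x * k⁻¹ * x⁻¹) * (x * k * x⁻¹) ∈ MulAut.conj x • K ⊔ solRadical G :=
      mul_mem (Subgroup.mem_sup_right hS) (Subgroup.mem_sup_left hk')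
    have heq2 : (k * x * k⁻¹ * x⁻¹) * (x * k * x⁻¹) = k := by group
    rwa [heq2] at hmem2
  exact (aux_main hperfK hperfK' n c (fun i => MulAut.conj x • c i) hc0 hcn hchainP
    hc'0 hc'n hchain' hK'le hKle).symm
end
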